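/- arXiv:1708.07230 — 2 statements merged into one kernel-verified Lean document; each statement's English description precedes it below -/
import Mathlib

section
/- The static transition function of a DATE over-approximates the concrete transition function: for every monitoring variable state θ ∈ Θ, ground trace t ∈ Σ* and state q ∈ Q, if Δ*((q,θ), t) = (q', θ') for some q' and θ', then q' ∈ approxΔ*({q}, t). -/
open Classical

/-- A property automaton over states `Q` and alphabet `E`: a deterministic and
total transition relation is represented as a transition function. -/
structure PA (Q : Type*) (E : Type*) where
  init : Q
  bad : Set Q
  next : Q → E → Q

namespace PA

variable {Q E : Type*}

/-- Iterated application of the transition function along a ground trace. -/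
def run (π : PA Q E) (q : Q) (t : List E) : Q := t.foldl π.next q

/-- A ground trace satisfies a property automaton iff no prefix of it leads
from the initial state to a bad state. -/
def Sat (t : List E) (π : PA Q E) : Prop :=
  ∀ t' : List E, t' <+: t → π.run π.init t' ∉ π.bad

/-- Equivalence of two property automata with respect to a set of ground traces. -/
def EquivOn (T : Set (List E)) (π π' : PA Q E) : Prop :=
  ∀ t ∈ T, Sat t π ↔ Sat t π'

end PA

/-- A static program: a set of static parametrised traces over identifiers `α`,
together with a must-alias equivalence relation and a may-alias relation. -/
structure SProg (α : Type*) (E : Type*) where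
  traces : Set (List (α × E))
  must : α → α → Prop
  may : α → α → Prop
  must_equiv : Equivalence must
  must_sub_may : ∀ {x y : α}, must x y → may x y

namespace SProg

variable {α E : Type*}

-- Projection of a static parametrised trace onto an identifier `x`,
-- yielding the set of possible ground traces.
open Classical in
noncomputable def proj (P : SProg α E) (x : α) : List (α × E) → Set (List E)
  | [] => {[]}
  | (x', e) :: st =>
      if P.must x x' then (e :: ·) '' P.proj x st
      else if P.may x x' then P.proj x st ∪ (e :: ·) '' P.proj x st
      else P.proj x st

/-- The projection of a static program onto a single identifier. -/
def projId (P : SProg α E) (x : α) : Set (List E) :=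
  {t | ∃ st ∈ P.traces, t ∈ P.proj x st}

/-- The projection of a static program onto all identifiers (`P ⇓ OId`). -/
def projAll (P : SProg α E) : Set (List E) :=
  {t | ∃ st ∈ P.traces, ∃ x : α, t ∈ P.proj x st}

end SProg

/-- Satisfaction of a property automaton by a static parametrised trace:
every projection onto every identifier satisfies the automaton. -/
def PA.SSat {α Q E : Type*} (P : SProg α E) (st : List (α × E)) (π : PA Q E) : Prop :=
  ∀ x : α, ∀ t ∈ P.proj x st, PA.Sat t π

/-- Equivalence of two property automata with respect to a static program. -/
def PA.SEquiv {α Q E : Type*} (P : SProg α E) (π π' : PA Q E) : Prop :=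
  ∀ st ∈ P.traces, PA.SSat P st π ↔ PA.SSat P st π'

/-- A transition of a DATE: source state, event, condition, action, target state. -/
structure DTrans (Q : Type*) (E : Type*) (Θ : Type*) where
  src : Q
  ev : E
  cond : Θ → Bool
  act : Θ → Θ
  tgt : Q

/-- A DATE (without timers/channels): states `Q`, events `E`, monitoring
variable states `Θ`, initial state, initial monitoring state, bad states,
and a transition relation. -/
structure DATE (Q : Type*) (E : Type*) (Θ : Type*) where
  init : Q
  th0 : Θ
  bad : Set Q
  delta : Set (DTrans Q E Θ)

namespace DATE

variable {Q E Θ : Type*}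

/-- Determinism: from each state, any two distinct transitions with the same
event have conditions that are never simultaneously true. -/
def Deterministic (D : DATE Q E Θ) : Prop :=
  ∀ d ∈ D.delta, ∀ d' ∈ D.delta,
    d.src = d'.src → d.ev = d'.ev → d ≠ d' →
      ∀ θ : Θ, ¬(d.cond θ = true ∧ d'.cond θ = true)

/-- The concrete transition function `Δ`. -/
noncomputable def step (D : DATE Q E Θ) (s : Q × Θ) (e : E) : Q × Θ :=
  if h : ∃ d ∈ D.delta, d.src = s.1 ∧ d.ev = e ∧ d.cond s.2 = true
  then (h.choose.tgt, h.choose.act s.2)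
  else s

/-- `Δ*`: iterated concrete transition function along a ground trace. -/
noncomputable def run (D : DATE Q E Θ) (s : Q × Θ) (t : List E) : Q × Θ :=
  t.foldl D.step s

/-- A ground trace satisfies a DATE iff no prefix of it drives `Δ*` from the
initial configuration into a bad state. -/
def Sat (t : List E) (D : DATE Q E Θ) : Prop :=
  ∀ t' : List E, t' <+: t → (D.run (D.init, D.th0) t').1 ∉ D.bad

/-- Equivalence of two DATEs with respect to a set of ground traces. -/
def EquivOn (T : Set (List E)) (D D' : DATE Q E Θ) : Prop :=
  ∀ t ∈ T, Sat t D ↔ Sat t D'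

/-- The static transition relation `q →e_approx q'`. -/
def ApproxStep (D : DATE Q E Θ) (q : Q) (e : E) (q' : Q) : Prop :=
  (∃ d ∈ D.delta, d.src = q ∧ d.ev = e ∧ d.tgt = q' ∧ ¬ ∀ θ : Θ, d.cond θ = false)
  ∨ (q' = q ∧ ¬ ∃ d ∈ D.delta, d.src = q ∧ d.ev = e ∧ d.tgt ≠ q ∧ ∀ θ : Θ, d.cond θ = true)

/-- The static transition function on sets of states. -/
def approxSet (D : DATE Q E Θ) (S : Set Q) (e : E) : Set Q :=
  {q' | ∃ q ∈ S, D.ApproxStep q e q'}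

/-- `approxΔ*`: iterated static transition function along a ground trace. -/
def approxRun (D : DATE Q E Θ) (S : Set Q) (t : List E) : Set Q :=
  t.foldl D.approxSet S

/-- `q ↪ q'`: `q'` is reachable from `q` via the static transition relation. -/
def Reach (D : DATE Q E Θ) (q q' : Q) : Prop :=
  ∃ t : List E, q' ∈ D.approxRun {q} t

/-- `badAfter(q)`: `q` is reachable from the initial state and can reach a bad state. -/
def BadAfter (D : DATE Q E Θ) (q : Q) : Prop :=
  D.Reach D.init q ∧ ∃ q' ∈ D.bad, D.Reach q q'

/-- `goodEntryPoint(q)`. -/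
def GoodEntryPoint (D : DATE Q E Θ) (q : Q) : Prop :=
  ¬ D.BadAfter q ∧ ∃ q' : Q, ∃ e : E, D.BadAfter q' ∧ D.ApproxStep q' e q

/-- `useful(q)`. -/
def Useful (D : DATE Q E Θ) (q : Q) : Prop :=
  D.BadAfter q ∨ D.GoodEntryPoint q

/-- Restriction of a DATE to a set of transitions (`D ↾ δ'`). -/
def restrict (D : DATE Q E Θ) (δ' : Set (DTrans Q E Θ)) : DATE Q E Θ :=
  { D with delta := D.delta ∩ δ' }

/-- The reachability-reduced DATE `reach(D)`: only useful states and
transitions between useful states are kept. -/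
def reachReduce (D : DATE Q E Θ) : DATE Q E Θ :=
  D.restrict {d | D.Useful d.src ∧ D.Useful d.tgt}

/-- Alphabet restriction `D ↾ Σ'`. -/
def alphaRestrict (D : DATE Q E Θ) (A : Set E) : DATE Q E Θ :=
  D.restrict {d | d.ev ∈ A}

/-- `Σ(T)`: the set of events occurring in some trace of `T`. -/
def eventsOf (T : Set (List E)) : Set E :=
  {e | ∃ t ∈ T, e ∈ t}

/-- Component-wise union of two DATEs (sharing initial state and initial
monitoring state). -/
def union (D₁ D₂ : DATE Q E Θ) : DATE Q E Θ :=
  { init := D₁.init, th0 := D₁.th0, bad := D₁.bad ∪ D₂.bad,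
    delta := D₁.delta ∪ D₂.delta }

/-- Component-wise union of a family of DATEs, with given initial state and
initial monitoring state. -/
def unionFamily {ι : Type*} (q0 : Q) (θ0 : Θ) (f : ι → DATE Q E Θ) : DATE Q E Θ :=
  { init := q0, th0 := θ0, bad := ⋃ i, (f i).bad, delta := ⋃ i, (f i).delta }

/-- A ground trace `t` uses a transition `d`. -/
def Uses (D : DATE Q E Θ) (t : List E) (d : DTrans Q E Θ) : Prop :=
  (¬ ∀ θ : Θ, d.cond θ = false) ∧
    ∃ t' : List E, (t' ++ [d.ev]) <+: t ∧ d.src ∈ D.approxRun {D.init} t'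

/-- Satisfaction of a DATE by a static parametrised trace. -/
def SSat {α : Type*} (P : SProg α E) (st : List (α × E)) (D : DATE Q E Θ) : Prop :=
  ∀ x : α, ∀ t ∈ P.proj x st, Sat t D

/-- Equivalence of two DATEs with respect to a static program. -/
def SEquiv {α : Type*} (P : SProg α E) (D D' : DATE Q E Θ) : Prop :=
  ∀ st ∈ P.traces, SSat P st D ↔ SSat P st D'

end DATE

/-- Translation of a property automaton into a DATE with `Θ = Unit`:
each transition `(q, e, q')` becomes `q —e|true↦skip→ q'`. -/
def PA.toDATE {Q E : Type*} (π : PA Q E) : DATE Q E Unit :=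
  { init := π.init, th0 := (), bad := π.bad,
    delta := {d | d.cond = (fun _ => true) ∧ d.act = id ∧ d.tgt = π.next d.src d.ev} }

/-- The flow-sensitive residual `residual₂(D, P)`. -/
def DATE.residual2 {α Q E Θ : Type*} (D : DATE Q E Θ) (P : SProg α E) : DATE Q E Θ :=
  (D.restrict {d | ∃ t ∈ P.projAll, D.Uses t d}).reachReduce

/-- Consecutive application of the flow-sensitive residual over a list of
static program over-approximations. -/
def DATE.residual2List {α Q E Θ : Type*} (D : DATE Q E Θ) :
    List (SProg α E) → DATE Q E Θ
  | [] => D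
  | P :: Ps => DATE.residual2List (D.residual2 P) Ps

lemma DATE.step_approxStep {Q E Θ : Type*} (D : DATE Q E Θ) (q : Q) (θ : Θ) (e : E) :
    D.ApproxStep q e (D.step (q, θ) e).1 := by
  unfold DATE.step
  by_cases h : ∃ d ∈ D.delta, d.src = (q, θ).1 ∧ d.ev = e ∧ d.cond (q, θ).2 = true
  · simp only [dif_pos h]
    obtain ⟨hd, hsrc, hev, hcond⟩ := h.choose_spec
    exact Or.inl ⟨h.choose, hd, hsrc, hev, rfl, fun hall => by simp [hall θ] at hcond⟩
  · simp only [dif_neg h]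
    refine Or.inr ⟨rfl, fun ⟨d, hd, hsrc, hev, _, hall⟩ => h ⟨d, hd, hsrc, hev, hall θ⟩⟩

lemma DATE.run_mem_approxRun {Q E Θ : Type*} (D : DATE Q E Θ) :
    ∀ (t : List E) (S : Set Q) (q : Q) (θ : Θ), q ∈ S →
      (D.run (q, θ) t).1 ∈ D.approxRun S t := by
  intro t
  induction t with
  | nil => intro S q θ hq; exact hq
  | cons e t ih =>
      intro S q θ hq
      have := ih (D.approxSet S e) (D.step (q, θ) e).1 (D.step (q, θ) e).2
        ⟨q, hq, D.step_approxStep q θ e⟩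
      simpa [DATE.run, DATE.approxRun] using this

/-- The static transition function of a DATE over-approximates
the concrete transition function. -/
theorem approxRun_overapproximates_run {Q E Θ : Type*} (D : DATE Q E Θ)
    (hdet : D.Deterministic) :
    ∀ (θ : Θ) (t : List E) (q : Q), ∀ (q' : Q) (θ' : Θ),
      D.run (q, θ) t = (q', θ') → q' ∈ D.approxRun {q} t := by
  intro θ t q q' θ' h
  have := D.run_mem_approxRun t {q} q θ rfl
  rwa [h] at this
end

section
/- A DATE D is equivalent to its reachability-reduced counterpart reach(D) with respect to any set of ground traces: for every T ⊆ Σ*, D ≅_T reach(D). -/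
open Classical

namespace DATE

variable {Q E Θ : Type*}

lemma approxRun_append (D : DATE Q E Θ) (S : Set Q) (t t' : List E) :
    D.approxRun S (t ++ t') = D.approxRun (D.approxRun S t) t' := by
  unfold approxRun; exact List.foldl_append

lemma mem_approxSet {D : DATE Q E Θ} {S : Set Q} {q q' : Q} {e : E}
    (hq : q ∈ S) (h : D.ApproxStep q e q') : q' ∈ D.approxSet S e :=
  ⟨q, hq, h⟩

lemma approxRun_mono (D : DATE Q E Θ) :
    ∀ (t : List E) {S S' : Set Q}, S ⊆ S' → D.approxRun S t ⊆ D.approxRun S' t := by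
  intro t
  induction t with
  | nil => intro S S' h; exact h
  | cons e t ih =>
      intro S S' h
      exact ih (fun q' ⟨q, hq, hs⟩ => ⟨q, h hq, hs⟩)

lemma reach_refl (D : DATE Q E Θ) (q : Q) : D.Reach q q :=
  ⟨[], rfl⟩

lemma reach_trans {D : DATE Q E Θ} {q q' q'' : Q}
    (h1 : D.Reach q q') (h2 : D.Reach q' q'') : D.Reach q q'' := by
  obtain ⟨t1, h1⟩ := h1
  obtain ⟨t2, h2⟩ := h2
  refine ⟨t1 ++ t2, ?_⟩
  rw [approxRun_append]
  exact approxRun_mono D t2 (Set.singleton_subset_iff.mpr h1) h2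

lemma approxStep_reach {D : DATE Q E Θ} {q q' : Q} {e : E}
    (h : D.ApproxStep q e q') : D.Reach q q' :=
  ⟨[e], ⟨q, rfl, h⟩⟩

lemma step_approx (D : DATE Q E Θ) (s : Q × Θ) (e : E) :
    D.ApproxStep s.1 e (D.step s e).1 := by
  unfold step
  by_cases h : ∃ d ∈ D.delta, d.src = s.1 ∧ d.ev = e ∧ d.cond s.2 = true
  · rw [dif_pos h]
    obtain ⟨hmem, hsrc, hev, hcond⟩ := h.choose_spec
    exact Or.inl ⟨h.choose, hmem, hsrc, hev, rfl,
      fun hall => by simpa [hall s.2] using hcond⟩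
  · rw [dif_neg h]
    refine Or.inr ⟨rfl, fun ⟨d, hd, hsrc, hev, _, hall⟩ => h ⟨d, hd, hsrc, hev, hall s.2⟩⟩

lemma run_mem_approxRun_s8 (D : DATE Q E Θ) :
    ∀ (t : List E) (s : Q × Θ) (S : Set Q), s.1 ∈ S →
      (D.run s t).1 ∈ D.approxRun S t := by
  intro t
  induction t with
  | nil => intro s S h; exact h
  | cons e t ih =>
      intro s S h
      exact ih (D.step s e) _ (mem_approxSet h (step_approx D s e))

lemma reach_run (D : DATE Q E Θ) (s : Q × Θ) (t : List E) :
    D.Reach s.1 (D.run s t).1 :=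
  ⟨t, run_mem_approxRun_s8 D t s _ rfl⟩

lemma step_eq {D : DATE Q E Θ} (hdet : D.Deterministic) {d : DTrans Q E Θ}
    {s : Q × Θ} {e : E} (hd : d ∈ D.delta) (hsrc : d.src = s.1) (hev : d.ev = e)
    (hcond : d.cond s.2 = true) : D.step s e = (d.tgt, d.act s.2) := by
  have h : ∃ d ∈ D.delta, d.src = s.1 ∧ d.ev = e ∧ d.cond s.2 = true :=
    ⟨d, hd, hsrc, hev, hcond⟩
  have hspec := h.choose_spec
  have : h.choose = d := by
    by_contra hne
    exact hdet h.choose hspec.1 d hd (hspec.2.1.trans hsrc.symm)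
      (hspec.2.2.1.trans hev.symm) hne s.2 ⟨hspec.2.2.2, hcond⟩
  unfold step
  rw [dif_pos h, this]

lemma restrict_delta (D : DATE Q E Θ) (S : Set (DTrans Q E Θ)) :
    (D.restrict S).delta = D.delta ∩ S := rfl

lemma restrict_det {D : DATE Q E Θ} (hdet : D.Deterministic)
    (S : Set (DTrans Q E Θ)) : (D.restrict S).Deterministic :=
  fun d hd d' hd' h1 h2 h3 => hdet d hd.1 d' hd'.1 h1 h2 h3

lemma step_stay {D : DATE Q E Θ} {s : Q × Θ} {e : E}
    (h : ¬ ∃ d ∈ D.delta, d.src = s.1 ∧ d.ev = e ∧ d.cond s.2 = true) :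
    D.step s e = s := by
  unfold step; rw [dif_neg h]

lemma restrict_step_cases (D : DATE Q E Θ) (S : Set (DTrans Q E Θ))
    (s : Q × Θ) (e : E) :
    ((D.restrict S).step s e).1 = s.1 ∨
      D.ApproxStep s.1 e (((D.restrict S).step s e).1) := by
  by_cases h : ∃ d ∈ (D.restrict S).delta, d.src = s.1 ∧ d.ev = e ∧ d.cond s.2 = true
  · right
    show D.ApproxStep s.1 e (((D.restrict S).step s e).1)
    unfold step
    rw [dif_pos h]
    obtain ⟨hmem, hsrc, hev, hcond⟩ := h.choose_spec
    exact Or.inl ⟨h.choose, hmem.1, hsrc, hev, rfl,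
      fun hall => by simpa [hall s.2] using hcond⟩
  · left; rw [step_stay h]

/-- badAfter source with an approx step gives useful target. -/
lemma useful_of_badAfter_step {D : DATE Q E Θ} {q q' : Q} {e : E}
    (hb : D.BadAfter q) (h : D.ApproxStep q e q') : D.Useful q' := by
  by_cases hb' : D.BadAfter q'
  · exact Or.inl hb'
  · exact Or.inr ⟨hb', q, e, hb, h⟩

lemma not_badAfter_step {D : DATE Q E Θ} {q q' : Q} {e : E}
    (hr : D.Reach D.init q) (hnb : ¬ D.BadAfter q) (h : D.ApproxStep q e q') :
    ¬ D.BadAfter q' := by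
  intro ⟨_, qb, hqb, hrb⟩
  exact hnb ⟨hr, qb, hqb, reach_trans (approxStep_reach h) hrb⟩

end DATE

namespace DATE

variable {Q E Θ : Type*}

lemma run_append (D : DATE Q E Θ) (s : Q × Θ) (t t' : List E) :
    D.run s (t ++ t') = D.run (D.run s t) t' := by
  unfold run; exact List.foldl_append

/-- Along a run that ends in a bad state, the full DATE and the reduced DATE
agree. -/
lemma bad_run_eq {D : DATE Q E Θ} (hdet : D.Deterministic) {p : List E}
    (hbad : (D.run (D.init, D.th0) p).1 ∈ D.bad) :
    D.run (D.init, D.th0) p = D.reachReduce.run (D.init, D.th0) p := by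
  set s0 : Q × Θ := (D.init, D.th0) with hs0
  set qb := (D.run s0 p).1 with hqb
  suffices h : ∀ p1 p2 : List E, p1 ++ p2 = p → D.run s0 p1 = D.reachReduce.run s0 p1 by
    exact h p [] (List.append_nil p)
  intro p1
  induction p1 using List.reverseRecOn with
  | nil => intro p2 h; rfl
  | append_singleton l e ih =>
      intro p2 hp
      have hl : l ++ (e :: p2) = p := by simpa using hp
      have heq := ih (e :: p2) hl
      set s := D.run s0 l with hs
      -- the current state possibly leads to a violation
      have hreach1 : D.Reach D.init s.1 := reach_run D s0 l
      have hreach2 : D.Reach s.1 qb := by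
        have : qb = (D.run s (e :: p2)).1 := by rw [hqb, ← hl, run_append]
        rw [this]; exact reach_run D s (e :: p2)
      have hbq : D.BadAfter s.1 := ⟨hreach1, qb, hbad, hreach2⟩
      -- the next state possibly leads to a violation too
      have hreach1' : D.Reach D.init (D.step s e).1 := by
        have : D.step s e = D.run s0 (l ++ [e]) := by rw [run_append]; rfl
        rw [this]; exact reach_run D s0 (l ++ [e])
      have hreach2' : D.Reach (D.step s e).1 qb := by
        have : qb = (D.run (D.step s e) p2).1 := by
          rw [hqb, ← hp, run_append, run_append]; rfl
        rw [this]; exact reach_run D (D.step s e) p2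
      have hbq' : D.BadAfter (D.step s e).1 := ⟨hreach1', qb, hbad, hreach2'⟩
      rw [run_append, run_append, ← heq, ← hs]
      show D.run s [e] = D.reachReduce.run s [e]
      by_cases hf : ∃ d ∈ D.delta, d.src = s.1 ∧ d.ev = e ∧ d.cond s.2 = true
      · obtain ⟨d, hd, hsrc, hev, hcond⟩ := hf
        have hstep : D.step s e = (d.tgt, d.act s.2) := step_eq hdet hd hsrc hev hcond
        have hud : d ∈ D.reachReduce.delta := by
          refine ⟨hd, Or.inl (hsrc ▸ hbq), Or.inl ?_⟩
          have : d.tgt = (D.step s e).1 := by rw [hstep]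
          rw [this]; exact hbq'
        have hstep' : D.reachReduce.step s e = (d.tgt, d.act s.2) :=
          step_eq (restrict_det hdet _) hud hsrc hev hcond
        show D.step s e = D.reachReduce.step s e
        rw [hstep, hstep']
      · have hf' : ¬ ∃ d ∈ D.reachReduce.delta, d.src = s.1 ∧ d.ev = e ∧ d.cond s.2 = true := by
          rintro ⟨d, ⟨hd, _⟩, hrest⟩; exact hf ⟨d, hd, hrest⟩
        show D.step s e = D.reachReduce.step s e
        rw [step_stay hf, step_stay hf']

lemma reachReduce_step_cases (D : DATE Q E Θ) (s : Q × Θ) (e : E) :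
    (D.reachReduce.step s e).1 = s.1 ∨ D.ApproxStep s.1 e (D.reachReduce.step s e).1 :=
  restrict_step_cases D _ s e

/-- The key invariant for the reduced run: its state is statically reachable,
and either it coincides with the full run or its state cannot lead to a
violation. -/
lemma reduce_invariant {D : DATE Q E Θ} (hdet : D.Deterministic) (p : List E) :
    D.Reach D.init (D.reachReduce.run (D.init, D.th0) p).1 ∧
      (D.run (D.init, D.th0) p = D.reachReduce.run (D.init, D.th0) p ∨
        ¬ D.BadAfter (D.reachReduce.run (D.init, D.th0) p).1) := by
  set s0 : Q × Θ := (D.init, D.th0) with hs0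
  induction p using List.reverseRecOn with
  | nil => exact ⟨reach_refl D D.init, Or.inl rfl⟩
  | append_singleton l e ih =>
      obtain ⟨hr, hcase⟩ := ih
      set s := D.run s0 l with hs
      set s' := D.reachReduce.run s0 l with hs'
      have hrun : D.run s0 (l ++ [e]) = D.step s e := by rw [run_append]; rfl
      have hrun' : D.reachReduce.run s0 (l ++ [e]) = D.reachReduce.step s' e := by
        rw [run_append]; rfl
      have hsc := reachReduce_step_cases D s' e
      constructor
      · rw [hrun']
        rcases hsc with h | h
        · rw [h]; exact hr
        · exact reach_trans hr (approxStep_reach h)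
      · rw [hrun, hrun']
        rcases hcase with heq | hnb
        · -- runs coincide so far
          by_cases hf : ∃ d ∈ D.delta, d.src = s.1 ∧ d.ev = e ∧ d.cond s.2 = true
          · obtain ⟨d, hd, hsrc, hev, hcond⟩ := hf
            have hstep : D.step s e = (d.tgt, d.act s.2) := step_eq hdet hd hsrc hev hcond
            by_cases hu : D.Useful d.src ∧ D.Useful d.tgt
            · left
              have hud : d ∈ D.reachReduce.delta := ⟨hd, hu⟩
              have hstep' : D.reachReduce.step s' e = (d.tgt, d.act s'.2) :=
                step_eq (restrict_det hdet _) hud (heq ▸ hsrc) hev (heq ▸ hcond)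
              rw [hstep, hstep', ← heq]
            · right
              -- the current state cannot lead to a violation
              have hnb : ¬ D.BadAfter s.1 := by
                intro hb
                refine hu ⟨Or.inl (hsrc ▸ hb), useful_of_badAfter_step (e := e) hb ?_⟩
                exact Or.inl ⟨d, hd, hsrc, hev, rfl,
                  fun hall => by simpa [hall s.2] using hcond⟩
              rcases hsc with h | h
              · rw [h, ← heq]; exact hnb
              · exact not_badAfter_step hr (heq ▸ hnb) h
          · have hf' : ¬ ∃ d ∈ D.reachReduce.delta, d.src = s'.1 ∧ d.ev = e ∧ d.cond s'.2 = true := by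
              rintro ⟨d, ⟨hd, _⟩, hrest⟩; exact hf ⟨d, hd, heq ▸ hrest⟩
            left
            rw [step_stay hf, step_stay hf', heq]
        · -- the current reduced state cannot lead to a violation
          right
          rcases hsc with h | h
          · rw [h]; exact hnb
          · exact not_badAfter_step hr hnb h

end DATE

/-- A DATE is equivalent to its reachability-reduced counterpart
with respect to any set of ground traces. -/
theorem reachReduce_equiv {Q E Θ : Type*} (D : DATE Q E Θ)
    (hdet : D.Deterministic) :
    ∀ T : Set (List E), DATE.EquivOn T D D.reachReduce := by
  intro T t _
  constructor
  · intro hsat p hp hbad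
    obtain ⟨hr, hcase⟩ := DATE.reduce_invariant hdet p
    have hbad' : (D.reachReduce.run (D.init, D.th0) p).1 ∈ D.bad := hbad
    have hba : D.BadAfter (D.reachReduce.run (D.init, D.th0) p).1 :=
      ⟨hr, _, hbad', DATE.reach_refl D _⟩
    rcases hcase with heq | hnb
    · exact hsat p hp (by rw [heq]; exact hbad')
    · exact hnb hba
  · intro hsat p hp hbad
    have heq := DATE.bad_run_eq hdet hbad
    refine hsat p hp ?_
    show (D.reachReduce.run (D.init, D.th0) p).1 ∈ D.bad
    rw [← heq]; exact hbad
end
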